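/- For all δ > 0 and ξ > 0, one has (1/δ)·((1 + ξ/δ)·ln(1 + δ/ξ) − 1) ≥ (2·ln 2 − 1)·min{1/δ, 1/ξ}. -/

import Mathlib

open Real

private lemma key_deriv (c : ℝ) {x : ℝ} (hx : -1 < x) :
    HasDerivAt (fun t => Real.log (1 + t) - (c * t ^ 2 + t) / (t + 1))
      (x * ((1 - 2 * c) - c * x) / (x + 1) ^ 2) x := by
  have h1 : (1:ℝ) + x ≠ 0 := by linarith
  have h2 : x + 1 ≠ 0 := by linarith
  have hlog : HasDerivAt (fun t : ℝ => Real.log (1 + t)) (1 / (1 + x)) x := by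
    have := (Real.hasDerivAt_log h1).comp x ((hasDerivAt_id x).const_add 1)
    exact this.congr_deriv (by simp)
  have hnum : HasDerivAt (fun t : ℝ => c * t ^ 2 + t) (c * (2 * x) + 1) x := by
    have := ((hasDerivAt_pow 2 x).const_mul c).add (hasDerivAt_id x)
    exact this.congr_deriv (by norm_num)
  have hden : HasDerivAt (fun t : ℝ => t + 1) 1 x := by
    simpa using (hasDerivAt_id x).add_const 1
  have hq := hnum.div hden h2
  have := hlog.sub hq
  refine this.congr_deriv ?_
  field_simp
  ring

private lemma key_ineq {t : ℝ} (ht0 : 0 ≤ t) (ht1 : t ≤ 1) :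
    (2 * Real.log 2 - 1) * t ^ 2 + t ≤ (t + 1) * Real.log (1 + t) := by
  set c : ℝ := 2 * Real.log 2 - 1 with hc
  have hl2 : 0.6931471803 < Real.log 2 := Real.log_two_gt_d9
  have hl2' : Real.log 2 < 0.6931471808 := Real.log_two_lt_d9
  have hc0 : (1:ℝ)/3 < c := by rw [hc]; linarith
  have hc1 : c < 1/2 := by rw [hc]; linarith
  set a : ℝ := (1 - 2 * c) / c with ha
  have hcpos : 0 < c := by linarith
  have ha0 : 0 ≤ a := by
    apply div_nonneg; linarith; linarith
  have ha1 : a ≤ 1 := by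
    rw [ha, div_le_one hcpos]; linarith
  set f : ℝ → ℝ := fun t => Real.log (1 + t) - (c * t ^ 2 + t) / (t + 1) with hf
  have hderiv : ∀ x : ℝ, -1 < x → deriv f x = x * ((1 - 2 * c) - c * x) / (x + 1) ^ 2 :=
    fun x hx => (key_deriv c hx).deriv
  have hdiff : ∀ x ∈ Set.Icc (-1/2 : ℝ) 2, DifferentiableAt ℝ f x := by
    intro x hx
    exact (key_deriv c (by linarith [hx.1])).differentiableAt
  have hcont : ContinuousOn f (Set.Icc 0 1) := by
    intro x hx
    exact ((key_deriv c (by linarith [hx.1])).differentiableAt).continuousAt.continuousWithinAt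
  have hmono : MonotoneOn f (Set.Icc 0 a) := by
    apply monotoneOn_of_deriv_nonneg (convex_Icc 0 a)
    · intro x hx
      exact ((key_deriv c (by linarith [hx.1])).differentiableAt).continuousAt.continuousWithinAt
    · intro x hx
      rw [interior_Icc] at hx
      exact ((key_deriv c (by linarith [hx.1.le])).differentiableAt).differentiableWithinAt
    · intro x hx
      rw [interior_Icc] at hx
      rw [hderiv x (by linarith [hx.1])]
      apply div_nonneg _ (by positivity)
      apply mul_nonneg hx.1.le
      have : c * x ≤ c * a := by
        exact mul_le_mul_of_nonneg_left hx.2.le hcpos.le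
      rw [ha] at this
      rw [mul_div_cancel₀ _ (ne_of_gt hcpos)] at this
      linarith
  have hanti : AntitoneOn f (Set.Icc a 1) := by
    apply antitoneOn_of_deriv_nonpos (convex_Icc a 1)
    · intro x hx
      exact ((key_deriv c (by linarith [hx.1, ha0])).differentiableAt).continuousAt.continuousWithinAt
    · intro x hx
      rw [interior_Icc] at hx
      exact ((key_deriv c (by linarith [hx.1, ha0])).differentiableAt).differentiableWithinAt
    · intro x hx
      rw [interior_Icc] at hx
      rw [hderiv x (by linarith [hx.1, ha0])]
      apply div_nonpos_of_nonpos_of_nonneg _ (by positivity)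
      apply mul_nonpos_of_nonneg_of_nonpos (by linarith [hx.1, ha0])
      have : c * a ≤ c * x := mul_le_mul_of_nonneg_left hx.1.le hcpos.le
      rw [ha, mul_div_cancel₀ _ (ne_of_gt hcpos)] at this
      linarith
  have hf0 : f 0 = 0 := by simp [hf]
  have hf1 : f 1 = 0 := by
    have hc1' : c + 1 = 2 * Real.log 2 := by rw [hc]; ring
    simp only [hf]
    norm_num
    linarith
  have hft : 0 ≤ f t := by
    rcases le_total t a with h | h
    · have := hmono (Set.mem_Icc.2 ⟨le_refl 0, ha0⟩) (Set.mem_Icc.2 ⟨ht0, h⟩) ht0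
      rw [hf0] at this; exact this
    · have := hanti (Set.mem_Icc.2 ⟨h, ht1⟩) (Set.mem_Icc.2 ⟨ha1, le_refl 1⟩) ht1
      rw [hf1] at this; exact this
  have htpos : (0:ℝ) < t + 1 := by linarith
  have : (c * t ^ 2 + t) / (t + 1) ≤ Real.log (1 + t) := by
    simp only [hf] at hft; linarith
  rw [div_le_iff₀ htpos] at this
  calc c * t ^ 2 + t ≤ Real.log (1 + t) * (t + 1) := this
    _ = (t + 1) * Real.log (1 + t) := by ring

theorem psi2_opt_lower_bound (δ ξ : ℝ) (hδ : 0 < δ) (hξ : 0 < ξ) :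
    (1 / δ) * ((1 + ξ / δ) * Real.log (1 + δ / ξ) - 1) ≥
      (2 * Real.log 2 - 1) * min (1 / δ) (1 / ξ) := by
  set c : ℝ := 2 * Real.log 2 - 1 with hc
  set L : ℝ := Real.log (1 + δ / ξ) with hL
  rcases le_total δ ξ with hle | hle
  · -- δ ≤ ξ : min = 1/ξ
    rw [min_eq_right (by apply one_div_le_one_div_of_le hδ hle)]
    have ht0 : 0 ≤ δ / ξ := by positivity
    have ht1 : δ / ξ ≤ 1 := (div_le_one hξ).2 hle
    have hkey := key_ineq ht0 ht1
    rw [← hc, ← hL] at hkey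
    -- clear denominators in hkey : c*(δ/ξ)^2 + δ/ξ ≤ (δ/ξ+1)*L
    have h2 : c * δ ^ 2 + δ * ξ ≤ (δ + ξ) * ξ * L := by
      have h := mul_le_mul_of_nonneg_right hkey (sq_nonneg ξ)
      have hξ' : ξ ≠ 0 := ne_of_gt hξ
      have e1 : (c * (δ / ξ) ^ 2 + δ / ξ) * ξ ^ 2 = c * δ ^ 2 + δ * ξ := by
        field_simp
      have e2 : (δ / ξ + 1) * L * ξ ^ 2 = (δ + ξ) * ξ * L := by
        field_simp
      rw [e1, e2] at h
      exact h
    rw [ge_iff_le, ← sub_nonneg]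
    have expand : (1 / δ) * ((1 + ξ / δ) * L - 1) - c * (1 / ξ) =
        ((δ + ξ) * ξ * L - (c * δ ^ 2 + δ * ξ)) / (δ ^ 2 * ξ) := by
      field_simp
      ring
    rw [expand]
    apply div_nonneg (by linarith) (by positivity)
  · -- ξ ≤ δ : min = 1/δ
    rw [min_eq_left (by apply one_div_le_one_div_of_le hξ hle)]
    have h1p : (0:ℝ) < 1 + δ / ξ := by positivity
    have hlb : Real.log 2 - L ≤ 2 / (1 + δ / ξ) - 1 := by
      have := Real.log_le_sub_one_of_pos (show (0:ℝ) < 2 / (1 + δ / ξ) by positivity)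
      rwa [Real.log_div two_ne_zero (ne_of_gt h1p), ← hL] at this
    have hfrac : 2 / (1 + δ / ξ) - 1 = (ξ - δ) / (δ + ξ) := by
      field_simp
      ring
    rw [hfrac] at hlb
    have hLlb : (δ + ξ) * Real.log 2 + (δ - ξ) ≤ (δ + ξ) * L := by
      have hpos : (0:ℝ) < δ + ξ := by linarith
      have := mul_le_mul_of_nonneg_left hlb hpos.le
      rw [mul_div_cancel₀ _ (ne_of_gt hpos)] at this
      nlinarith [this]
    rw [ge_iff_le, ← sub_nonneg]
    have expand : (1 / δ) * ((1 + ξ / δ) * L - 1) - c * (1 / δ) =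
        ((δ + ξ) * L - δ - c * δ) / (δ ^ 2) := by
      field_simp
    rw [expand]
    apply div_nonneg _ (by positivity)
    have hl2' : Real.log 2 < 1 := by
      have := Real.log_two_lt_d9; linarith
    nlinarith [mul_nonneg (sub_nonneg.2 hle) (sub_nonneg.2 hl2'.le)]
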